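/- arXiv:1909.05849 — 3 statements merged into one kernel-verified Lean document; each statement's English description precedes it below -/
import Mathlib

section
/- Let G be a nonabelian finite group. Then G is nested if and only if for all elements g, h ∈ G \ Z(G), either [g,G] ≤ [h,G] or [h,G] ≤ [g,G]. -/
open CategoryTheory

/-- γ_G(g) = {[g,x] : x ∈ G} with [g,x] = g⁻¹x⁻¹gx. -/
def gammaSet (G : Type*) [Group G] (g : G) : Set G := {a | ∃ x : G, a = g⁻¹ * x⁻¹ * g * x}

/-- [g,G], the subgroup generated by γ_G(g). -/
def commSubgroup (G : Type*) [Group G] (g : G) : Subgroup G := Subgroup.closure (gammaSet G g)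

/-- [S,G], the subgroup generated by {[y,x] : y ∈ S, x ∈ G}. -/
def setCommSubgroup (G : Type*) [Group G] (S : Set G) : Subgroup G :=
  Subgroup.closure {a | ∃ y ∈ S, ∃ x : G, a = y⁻¹ * x⁻¹ * y * x}

/-- Z(χ) = {g : |χ(g)| = χ(1)} for the character χ of V. -/
noncomputable def charCenter {G : Type} [Group G] (V : FDRep ℂ G) : Set G :=
  {g | ((‖V.character g‖ : ℝ) : ℂ) = V.character 1}

/-- ker(χ) = {g : χ(g) = χ(1)} for the character χ of V. -/
noncomputable def charKer {G : Type} [Group G] (V : FDRep ℂ G) : Set G :=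
  {g | V.character g = V.character 1}

/-- G is nested if the centers of its irreducible characters form a chain. -/
noncomputable def IsNested (G : Type) [Group G] : Prop :=
  ∀ V W : FDRep ℂ G, Simple V → Simple W →
    charCenter V ⊆ charCenter W ∨ charCenter W ⊆ charCenter V

/-- G is a GVZ-group: χ(1)² = |G : Z(χ)| for every irreducible character χ. -/
noncomputable def IsGVZ (G : Type) [Group G] [Fintype G] : Prop :=
  ∀ V : FDRep ℂ G, Simple V →
    (Module.finrank ℂ V) ^ 2 * Nat.card (charCenter V) = Nat.card G

set_option linter.unusedSectionVars false

open Module Polynomial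

lemma multiset_sum_le_card {s : Multiset ℝ} (h : ∀ x ∈ s, x ≤ 1) :
    s.sum ≤ s.card := by
  induction s using Multiset.induction with
  | empty => simp
  | cons a s ih =>
    simp only [Multiset.sum_cons, Multiset.card_cons] at *
    push_cast
    have := h a (Multiset.mem_cons_self a s)
    have := ih (fun x hx => h x (Multiset.mem_cons_of_mem hx))
    linarith

lemma multiset_all_eq_one {s : Multiset ℝ} (h : ∀ x ∈ s, x ≤ 1)
    (hsum : s.sum = s.card) : ∀ x ∈ s, x = 1 := by
  induction s using Multiset.induction with
  | empty => simp
  | cons a s ih =>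
    simp only [Multiset.sum_cons, Multiset.card_cons] at hsum
    have h1 := h a (Multiset.mem_cons_self a s)
    have h2 : ∀ x ∈ s, x ≤ 1 := fun x hx => h x (Multiset.mem_cons_of_mem hx)
    have h3 := multiset_sum_le_card h2
    have ha : a = 1 := by push_cast at hsum; linarith
    have hs : s.sum = s.card := by push_cast at hsum ⊢; linarith
    intro x hx
    rcases Multiset.mem_cons.1 hx with rfl | hx
    · exact ha
    · exact ih h2 hs x hx

lemma unit_re_eq_one {u : ℂ} (hu : ‖u‖ = 1) (hre : u.re = 1) : u = 1 := by
  have h2 : u.re * u.re + u.im * u.im = 1 := by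
    have := Complex.sq_norm u
    rw [hu] at this
    simpa [Complex.normSq_apply, sq] using this.symm
  have : u.im = 0 := by nlinarith [mul_self_nonneg u.im]
  exact Complex.ext (by simp [hre]) (by simp [this])

lemma multiset_re_sum (w : ℂ) (s : Multiset ℂ) :
    (s.map (fun z => (z * w).re)).sum = (s.sum * w).re := by
  induction s using Multiset.induction with
  | empty => simp
  | cons a t ih =>
    simp only [Multiset.map_cons, Multiset.sum_cons, add_mul, Complex.add_re, ih]

lemma multiset_unit_sum_eq {s : Multiset ℂ} (h1 : ∀ z ∈ s, ‖z‖ = 1)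
    (hsum : ‖s.sum‖ = s.card) (hne : s ≠ 0) :
    ∃ c : ℂ, ‖c‖ = 1 ∧ ∀ z ∈ s, z = c := by
  have hcard : 0 < (s.card : ℝ) := by exact_mod_cast Multiset.card_pos.2 hne
  set c : ℂ := s.sum / s.card with hc
  have habs : ‖c‖ = 1 := by
    rw [hc, norm_div, hsum]; simp [ne_of_gt hcard]
  refine ⟨c, habs, ?_⟩
  set w := (starRingEnd ℂ) c with hw
  have habsw : ‖w‖ = 1 := by rw [hw, Complex.norm_conj]; exact habs
  have hcw : c * w = 1 := by
    have hn : ‖c‖ = 1 := by exact habs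
    rw [hw, Complex.mul_conj', hn]; norm_num
  have hkey : (s.sum * w).re = s.card := by
    have h1' : s.sum = (s.card : ℂ) * c := by
      rw [hc, mul_div_cancel₀]
      exact_mod_cast ne_of_gt hcard
    rw [h1', mul_assoc, hcw, mul_one]
    simp
  -- each (z*w).re ≤ 1, sum = card ⇒ all = 1
  have hle : ∀ x ∈ s.map (fun z => (z * w).re), x ≤ 1 := by
    intro x hx
    obtain ⟨z, hz, rfl⟩ := Multiset.mem_map.1 hx
    calc (z * w).re ≤ ‖z * w‖ := Complex.re_le_norm _
      _ = 1 := by rw [norm_mul, h1 z hz, habsw, one_mul]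
  have hall := multiset_all_eq_one hle (by
    rw [multiset_re_sum, hkey]; simp)
  intro z hz
  have h1z : (z * w).re = 1 := hall _ (Multiset.mem_map_of_mem _ hz)
  have huz : z * w = 1 := unit_re_eq_one (by rw [norm_mul, h1 z hz, habsw, one_mul]) h1z
  -- z = c since w = conj c and c * conj c = 1
  calc z = z * (w * c) := by rw [mul_comm w c, hcw, mul_one]
    _ = (z * w) * c := by ring
    _ = c := by rw [huz, one_mul]

lemma matrix_scalar_of_abs_trace {ι : Type} [Fintype ι] [DecidableEq ι] [Nonempty ι]
    (A : Matrix ι ι ℂ) {n : ℕ} (hn : n ≠ 0) (h1 : A ^ n = 1)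
    (htr : ‖A.trace‖ = Fintype.card ι) :
    ∃ c : ℂ, ‖c‖ = 1 ∧ A = c • 1 := by
  have hd : 0 < Fintype.card ι := Fintype.card_pos
  have hmonic := A.charpoly_monic
  have hdeg : A.charpoly.natDegree = Fintype.card ι := A.charpoly_natDegree_eq_dim
  have hsplits : A.charpoly.Splits := IsAlgClosed.splits _
  have hcard : Multiset.card A.charpoly.roots = Fintype.card ι := by
    rw [splits_iff_card_roots.1 hsplits, hdeg]
  -- every root is an n-th root of unity
  have hroot : ∀ μ ∈ A.charpoly.roots, μ ^ n = 1 := by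
    intro μ hμ
    have hμr : A.charpoly.IsRoot μ := isRoot_of_mem_roots hμ
    have hdet : (μ • (1 : Matrix ι ι ℂ) - A).det = 0 := by
      have h2 : (Polynomial.evalRingHom μ) A.charpoly =
          ((Polynomial.evalRingHom μ).mapMatrix (Matrix.charmatrix A)).det := by
        rw [Matrix.charpoly, ← RingHom.map_det]
      have h3 : (Polynomial.evalRingHom μ).mapMatrix (Matrix.charmatrix A)
          = μ • (1 : Matrix ι ι ℂ) - A := by
        ext i j
        by_cases h : i = j
        · subst h
          simp [Matrix.charmatrix_apply_eq, Matrix.one_apply]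
        · simp [Matrix.charmatrix_apply_ne _ _ _ h, Matrix.one_apply, h]
      rw [← h3, ← h2]
      simpa using hμr
    obtain ⟨v, hv0, hv⟩ := Matrix.exists_mulVec_eq_zero_iff.2 hdet
    have hAv : A.mulVec v = μ • v := by
      have := hv
      rw [Matrix.sub_mulVec, Matrix.smul_mulVec, Matrix.one_mulVec, sub_eq_zero] at this
      exact this.symm
    have hpow : ∀ k : ℕ, (A ^ k).mulVec v = μ ^ k • v := by
      intro k
      induction k with
      | zero => simp [Matrix.one_mulVec]
      | succ k ih =>
        rw [pow_succ, ← Matrix.mulVec_mulVec, hAv, Matrix.mulVec_smul, ih, pow_succ,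
          smul_smul, mul_comm]
    have := hpow n
    rw [h1, Matrix.one_mulVec] at this
    obtain ⟨i, hi⟩ := Function.ne_iff.1 hv0
    have : v i = (μ ^ n • v) i := congrFun this i
    have h4 : v i = μ ^ n * v i := this
    have : (μ ^ n - 1) * v i = 0 := by ring_nf; linear_combination h4.symm
    rcases mul_eq_zero.1 this with h | h
    · exact sub_eq_zero.1 h
    · exact absurd h hi
  -- modulus-1 roots
  have habs1 : ∀ z ∈ A.charpoly.roots, ‖z‖ = 1 := by
    intro z hz
    have h5 : (‖z‖) ^ n = 1 := by
      rw [← norm_pow, hroot z hz, norm_one]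
    have h0 : (0:ℝ) ≤ ‖z‖ := norm_nonneg _
    rcases lt_trichotomy (‖z‖) 1 with h | h | h
    · have := pow_lt_one₀ h0 h hn
      rw [h5] at this; linarith
    · exact h
    · have := one_lt_pow₀ h hn
      rw [h5] at this; linarith
  have hsum : ‖A.charpoly.roots.sum‖ = (Multiset.card A.charpoly.roots : ℝ) := by
    rw [← Matrix.trace_eq_sum_roots_charpoly, htr, hcard]
  have hne : A.charpoly.roots ≠ 0 := by
    intro h
    rw [h] at hcard
    simp at hcard
    omega
  obtain ⟨c, hc1, hc⟩ := multiset_unit_sum_eq habs1 hsum hne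
  refine ⟨c, hc1, ?_⟩
  -- charpoly = (X - C c) ^ d
  have hrep : A.charpoly.roots = Multiset.replicate (Fintype.card ι) c := by
    rw [Multiset.eq_replicate]
    exact ⟨hcard, hc⟩
  have hcp : A.charpoly = (X - C c) ^ (Fintype.card ι) := by
    have := hsplits.eq_prod_roots_of_monic hmonic
    rw [hrep] at this
    simpa [Multiset.map_replicate, Multiset.prod_replicate] using this
  -- minpoly
  have hint : IsIntegral ℂ A := IsIntegral.of_finite ℂ A
  have hdvd1 : minpoly ℂ A ∣ (X - C c) ^ (Fintype.card ι) := by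
    rw [← hcp]; exact minpoly.dvd ℂ A (Matrix.aeval_self_charpoly A)
  have hdvd2 : minpoly ℂ A ∣ X ^ n - C 1 := by
    apply minpoly.dvd ℂ A
    simp [aeval_X_pow, h1]
  have hsq : Squarefree (X ^ n - C (1:ℂ)) :=
    (separable_X_pow_sub_C 1 (by exact_mod_cast hn) one_ne_zero).squarefree
  have hmsq : Squarefree (minpoly ℂ A) := hsq.squarefree_of_dvd hdvd2
  have hdvd3 : minpoly ℂ A ∣ (X - C c) :=
    (hmsq.dvd_pow_iff_dvd (Nat.pos_iff_ne_zero.1 hd)).1 hdvd1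
  have hassoc : Associated (minpoly ℂ A) (X - C c) := by
    obtain ⟨q, hq⟩ := id hdvd3
    rcases (irreducible_X_sub_C c).isUnit_or_isUnit hq with h | h
    · exact absurd h (minpoly.not_isUnit ℂ A)
    · obtain ⟨r, hr⟩ := h.exists_right_inv
      refine associated_of_dvd_dvd hdvd3 ⟨r, ?_⟩
      calc minpoly ℂ A = minpoly ℂ A * (q * r) := by rw [hr, mul_one]
        _ = (minpoly ℂ A * q) * r := by ring
        _ = (X - C c) * r := by rw [← hq]
  have hmin : minpoly ℂ A = X - C c :=
    eq_of_monic_of_associated (minpoly.monic hint) (monic_X_sub_C c) hassoc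
  have := minpoly.aeval ℂ A
  rw [hmin] at this
  simp only [map_sub, aeval_X, aeval_C] at this
  rw [sub_eq_zero] at this
  rw [this, Algebra.algebraMap_eq_smul_one]


section
variable {G : Type} [Group G] [Fintype G]

def repKer (V : FDRep ℂ G) : Subgroup G where
  carrier := {g | V.ρ g = 1}
  one_mem' := V.ρ.map_one
  mul_mem' := by
    intro a b ha hb
    simp only [Set.mem_setOf_eq] at *
    rw [map_mul, ha, hb, mul_one]
  inv_mem' := by
    intro a ha
    simp only [Set.mem_setOf_eq] at *
    have h : V.ρ a⁻¹ * V.ρ a = 1 := by rw [← map_mul]; simp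
    rwa [ha, mul_one] at h

lemma mem_repKer {V : FDRep ℂ G} {g : G} : g ∈ repKer V ↔ V.ρ g = 1 := Iff.rfl

lemma nontrivial_of_simple (V : FDRep ℂ G) (hV : Simple V) : Nontrivial V := by
  haveI := hV
  rcases subsingleton_or_nontrivial V with h | h
  · exfalso
    apply CategoryTheory.id_nonzero V
    ext v
    exact @Subsingleton.elim _ h _ _
  · exact h

lemma exists_smul_of_commute (V : FDRep ℂ G) (hV : Simple V) (f : V →ₗ[ℂ] V)
    (hf : ∀ x : G, f * V.ρ x = V.ρ x * f) : ∃ c : ℂ, f = c • LinearMap.id := by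
  haveI := hV
  let m : V ⟶ V := ⟨FGModuleCat.ofHom f, by
    intro x
    have := hf x
    ext v
    exact congrFun (congrArg DFunLike.coe this) v⟩
  obtain ⟨c, hc⟩ := CategoryTheory.endomorphism_simple_eq_smul_id ℂ m
  refine ⟨c, ?_⟩
  have := congrArg Action.Hom.hom hc
  ext v
  have h2 := congrFun (congrArg (fun m => DFunLike.coe (ConcreteCategory.hom m)) this) v
  exact h2.symm

end

section
variable {G : Type} [Group G] [Fintype G]

-- linear-endomorphism version of the matrix lemma
lemma end_scalar_of_abs_trace {M : Type} [AddCommGroup M] [Module ℂ M] [FiniteDimensional ℂ M]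
    [Nontrivial M] (E : M →ₗ[ℂ] M) {n : ℕ} (hn : n ≠ 0) (h1 : E ^ n = 1)
    (htr : ‖LinearMap.trace ℂ M E‖ = finrank ℂ M) :
    ∃ c : ℂ, ‖c‖ = 1 ∧ E = c • LinearMap.id := by
  have hpos : 0 < finrank ℂ M := finrank_pos
  haveI : Nonempty (Fin (finrank ℂ M)) := Fin.pos_iff_nonempty.1 hpos
  let b := Module.finBasis ℂ M
  let φ := LinearMap.toMatrixAlgEquiv b
  have hA : (φ E) ^ n = 1 := by rw [← map_pow, h1, map_one]
  have heq : φ E = LinearMap.toMatrix b b E := rfl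
  have htr' : ‖(φ E).trace‖ = Fintype.card (Fin (finrank ℂ M)) := by
    rw [heq, ← LinearMap.trace_eq_matrix_trace ℂ b E]
    simpa using htr
  obtain ⟨c, hc1, hc⟩ := matrix_scalar_of_abs_trace (φ E) hn hA htr'
  refine ⟨c, hc1, ?_⟩
  apply φ.injective
  rw [hc]
  have : φ (c • LinearMap.id) = c • φ LinearMap.id := map_smul φ.toLinearEquiv.toLinearMap c _
  rw [this]
  congr 1
  exact (map_one φ).symm  -- φ LinearMap.id = 1? LinearMap.id = One.one
end

section
variable {G : Type} [Group G] [Fintype G]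

lemma abs_one_of_pow_eq_one {c : ℂ} {n : ℕ} (hn : n ≠ 0) (h : c ^ n = 1) :
    ‖c‖ = 1 := by
  have h5 : (‖c‖) ^ n = 1 := by rw [← norm_pow, h, norm_one]
  have h0 : (0:ℝ) ≤ ‖c‖ := norm_nonneg _
  rcases lt_trichotomy (‖c‖) 1 with h' | h' | h'
  · have := pow_lt_one₀ h0 h' hn
    rw [h5] at this; linarith
  · exact h'
  · have := one_lt_pow₀ h' hn
    rw [h5] at this; linarith

lemma rho_pow_orderOf (V : FDRep ℂ G) (g : G) : (V.ρ g) ^ (orderOf g) = 1 := by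
  rw [← map_pow, pow_orderOf_eq_one, map_one]

lemma mem_charCenter_of_scalar (V : FDRep ℂ G) (hV : Simple V) {g : G} {c : ℂ}
    (h : V.ρ g = c • LinearMap.id) : g ∈ charCenter V := by
  haveI := nontrivial_of_simple V hV
  have hn : orderOf g ≠ 0 := (orderOf_pos g).ne'
  have hcn : c ^ orderOf g = 1 := by
    have h1 := rho_pow_orderOf V g
    rw [h, _root_.smul_pow] at h1
    obtain ⟨v, hv⟩ := exists_ne (0 : V)
    have := congrFun (congrArg DFunLike.coe h1) v
    simp only [LinearMap.smul_apply, Module.End.pow_apply] at this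
    have h2 : c ^ orderOf g • v = v := by simpa using this
    by_contra hne
    have h3 : (c ^ orderOf g - 1) • v = 0 := by rw [sub_smul, h2, one_smul, sub_self]
    rcases smul_eq_zero.1 h3 with h4 | h4
    · exact hne (by linear_combination h4)
    · exact hv h4
  have habs : ‖c‖ = 1 := abs_one_of_pow_eq_one hn hcn
  show (‖V.character g‖ : ℂ) = V.character 1
  have hχ : V.character g = c * (finrank ℂ V : ℂ) := by
    show LinearMap.trace ℂ V (V.ρ g) = _
    rw [h, map_smul]
    simp [LinearMap.trace_one, smul_eq_mul]
  rw [hχ, FDRep.char_one]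
  rw [norm_mul, habs]
  simp [Complex.norm_natCast]

lemma scalar_of_mem_charCenter (V : FDRep ℂ G) (hV : Simple V) {g : G}
    (hg : g ∈ charCenter V) : ∃ c : ℂ, ‖c‖ = 1 ∧ V.ρ g = c • LinearMap.id := by
  haveI := nontrivial_of_simple V hV
  have hn : orderOf g ≠ 0 := (orderOf_pos g).ne'
  have habs : ‖LinearMap.trace ℂ V (V.ρ g)‖ = finrank ℂ V := by
    have := hg
    simp only [charCenter, Set.mem_setOf_eq, FDRep.char_one] at this
    have h2 : ((‖V.character g‖ : ℝ) : ℂ) = ((finrank ℂ V : ℝ) : ℂ) := by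
      rw [this]; push_cast; ring
    exact_mod_cast Complex.ofReal_inj.1 h2
  exact end_scalar_of_abs_trace (V.ρ g) hn (rho_pow_orderOf V g) habs

lemma rho_comm_all {V : FDRep ℂ G} {g : G} (h : ∀ x : G, V.ρ g * V.ρ x = V.ρ x * V.ρ g)
    (x : G) : V.ρ (g⁻¹ * x⁻¹ * g * x) = 1 := by
  have h1 : V.ρ g⁻¹ * V.ρ g = 1 := by rw [← map_mul]; simp
  have h2 : V.ρ x⁻¹ * V.ρ x = 1 := by rw [← map_mul]; simp
  rw [map_mul, map_mul, map_mul]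
  calc V.ρ g⁻¹ * V.ρ x⁻¹ * V.ρ g * V.ρ x
      = V.ρ g⁻¹ * (V.ρ x⁻¹ * V.ρ g) * V.ρ x := by rw [mul_assoc (V.ρ g⁻¹)]
    _ = V.ρ g⁻¹ * (V.ρ g * V.ρ x⁻¹) * V.ρ x := by rw [← h x⁻¹]
    _ = (V.ρ g⁻¹ * V.ρ g) * (V.ρ x⁻¹ * V.ρ x) := by
        simp only [mul_assoc]
    _ = 1 := by rw [h1, h2, mul_one]

lemma comm_all_of_commutators {V : FDRep ℂ G} {g : G}
    (h : ∀ x : G, V.ρ (g⁻¹ * x⁻¹ * g * x) = 1) (x : G) :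
    V.ρ g * V.ρ x = V.ρ x * V.ρ g := by
  have h1 := h x
  rw [map_mul, map_mul, map_mul] at h1
  have hg : V.ρ g * V.ρ g⁻¹ = 1 := by rw [← map_mul]; simp
  have hx : V.ρ x * V.ρ x⁻¹ = 1 := by rw [← map_mul]; simp
  have hxg : V.ρ x⁻¹ * V.ρ g * V.ρ x = V.ρ g := by
    calc V.ρ x⁻¹ * V.ρ g * V.ρ x
        = (V.ρ g * V.ρ g⁻¹) * (V.ρ x⁻¹ * V.ρ g * V.ρ x) := by rw [hg, one_mul]
      _ = V.ρ g * (V.ρ g⁻¹ * V.ρ x⁻¹ * V.ρ g * V.ρ x) := by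
          simp only [mul_assoc]
      _ = V.ρ g := by rw [h1, mul_one]
  calc V.ρ g * V.ρ x = (V.ρ x * V.ρ x⁻¹) * V.ρ g * V.ρ x := by rw [hx, one_mul]
    _ = V.ρ x * (V.ρ x⁻¹ * V.ρ g * V.ρ x) := by simp only [mul_assoc]
    _ = V.ρ x * V.ρ g := by rw [hxg]

lemma mem_charCenter_iff (V : FDRep ℂ G) (hV : Simple V) {g : G} :
    g ∈ charCenter V ↔ commSubgroup G g ≤ repKer V := by
  constructor
  · intro hg
    obtain ⟨c, hc1, hc⟩ := scalar_of_mem_charCenter V hV hg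
    have hcomm : ∀ x : G, V.ρ g * V.ρ x = V.ρ x * V.ρ g := by
      intro x
      rw [hc, smul_mul_assoc, mul_smul_comm]
      congr 1
    apply (Subgroup.closure_le _).2
    rintro a ⟨x, rfl⟩
    exact mem_repKer.2 (rho_comm_all hcomm x)
  · intro hle
    have hcomm := comm_all_of_commutators (V := V) (g := g)
      (fun x => mem_repKer.1 (hle (Subgroup.subset_closure ⟨x, rfl⟩)))
    obtain ⟨c, hc⟩ := exists_smul_of_commute V hV (V.ρ g) hcomm
    exact mem_charCenter_of_scalar V hV hc
end

lemma commSubgroup_normal (G : Type*) [Group G] (g : G) : (commSubgroup G g).Normal := by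
  constructor
  intro n hn x
  revert x
  induction hn using Subgroup.closure_induction with
  | mem a ha =>
    obtain ⟨y, rfl⟩ := ha
    intro x
    -- x * [g,y] * x⁻¹ = [g, x⁻¹]⁻¹ * [g, y * x⁻¹]
    have key : x * (g⁻¹ * y⁻¹ * g * y) * x⁻¹
        = (g⁻¹ * (x⁻¹)⁻¹ * g * x⁻¹)⁻¹ * (g⁻¹ * (y * x⁻¹)⁻¹ * g * (y * x⁻¹)) := by
      group
    rw [key]
    exact mul_mem (inv_mem (Subgroup.subset_closure ⟨x⁻¹, rfl⟩))
      (Subgroup.subset_closure ⟨y * x⁻¹, rfl⟩)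
  | one => intro x; simpa using one_mem _
  | mul a b _ _ iha ihb =>
    intro x
    have : x * (a * b) * x⁻¹ = (x * a * x⁻¹) * (x * b * x⁻¹) := by group
    rw [this]; exact mul_mem (iha x) (ihb x)
  | inv a _ iha =>
    intro x
    have : x * a⁻¹ * x⁻¹ = (x * a * x⁻¹)⁻¹ := by group
    rw [this]; exact inv_mem (iha x)

-- restriction of a representation to an invariant subspace
noncomputable def subRep {G : Type} [Group G] (V : FDRep ℂ G) (p : Submodule ℂ V)
    (hp : ∀ (g : G), ∀ x ∈ p, V.ρ g x ∈ p) : Representation ℂ G p where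
  toFun g := (V.ρ g).restrict (hp g)
  map_one' := by ext v; simp
  map_mul' a b := by ext v; simp [LinearMap.restrict_apply]

lemma simple_of_irred {G : Type} [Group G] (V : FDRep ℂ G) [Nontrivial V]
    (h : ∀ p : Submodule ℂ V, (∀ (g : G), ∀ x ∈ p, V.ρ g x ∈ p) → p = ⊥ ∨ p = ⊤) :
    Simple V := by
  constructor
  intro Y f hf
  constructor
  · intro hiso hf0
    have : 𝟙 V = inv f ≫ 0 := by rw [← hf0]; simp
    simp only [Limits.comp_zero] at this
    obtain ⟨v, hv⟩ := exists_ne (0 : V)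
    apply hv
    have := congrFun (congrArg (fun (m : V ⟶ V) => (DFunLike.coe (m.hom.hom.hom))) this) v
    simpa using this
  · intro hf0
    haveI : Module.Finite ℂ (↑Y.V.obj) := Y.V.property
    haveI : Module.Finite ℂ (↑V.V.obj) := V.V.property
    -- the range of f.hom is an invariant subspace
    have hcomm : ∀ (g : G) (y : Y), f.hom.hom.hom (Y.ρ g y) = V.ρ g (f.hom.hom.hom y) := by
      intro g y
      exact congrFun (congrArg (fun m => DFunLike.coe m.hom.hom) (f.comm g)) y
    have hrange : ∀ (g : G), ∀ x ∈ LinearMap.range f.hom.hom.hom, V.ρ g x ∈ LinearMap.range f.hom.hom.hom := by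
      rintro g x ⟨y, rfl⟩
      exact ⟨Y.ρ g y, hcomm g y⟩
    rcases h (LinearMap.range f.hom.hom.hom) hrange with hbot | htop
    · exfalso
      apply hf0
      ext y
      have : f.hom.hom.hom y ∈ LinearMap.range f.hom.hom.hom := ⟨y, rfl⟩
      rw [hbot] at this
      simpa using this
    -- kernel is trivial by Mono
    have hker : LinearMap.ker f.hom.hom.hom = ⊥ := by
      by_contra hk
      obtain ⟨z, hz, hz0⟩ := Submodule.exists_mem_ne_zero_of_ne_bot hk
      have hkinv : ∀ (g : G), ∀ x ∈ LinearMap.ker f.hom.hom.hom, Y.ρ g x ∈ LinearMap.ker f.hom.hom.hom := by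
        intro g x hx
        rw [LinearMap.mem_ker] at *
        exact (hcomm g x).trans (by rw [hx, map_zero])
      let Z : FDRep ℂ G := FDRep.of (subRep Y (LinearMap.ker f.hom.hom.hom) hkinv)
      let ι : Z ⟶ Y := ⟨FGModuleCat.ofHom (LinearMap.ker f.hom.hom.hom).subtype, fun g => rfl⟩
      have hzero : ι ≫ f = 0 := by
        ext w
        exact w.2
      have := (Preadditive.mono_iff_cancel_zero f).1 hf _ ι hzero
      apply hz0
      have := congrFun (congrArg (fun (m : Z ⟶ Y) => (DFunLike.coe (m.hom.hom.hom))) this) ⟨z, hz⟩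
      exact this
    -- bijective => iso
    have hbij : Function.Bijective f.hom.hom.hom := by
      constructor
      · rw [← LinearMap.ker_eq_bot]; exact hker
      · rw [← LinearMap.range_eq_top]; exact htop
    let e := LinearEquiv.ofBijective f.hom.hom.hom hbij
    have : IsIso f.hom := by
      change IsIso (e.toFGModuleCatIso).hom
      infer_instance
    exact Action.isIso_of_hom_isIso f

set_option maxHeartbeats 1000000 in
lemma exists_simple_rep_separating {G : Type} [Group G] [Fintype G]
    (N : Subgroup G) [hN : N.Normal] {a : G} (ha : a ∉ N) :
    ∃ V : FDRep ℂ G, Simple V ∧ (∀ n ∈ N, V.ρ n = 1) ∧ V.ρ a ≠ 1 := by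
  classical
  set Q := G ⧸ N with hQ
  haveI : Fintype Q := Fintype.ofFinite _
  haveI : NeZero ((Fintype.card Q : ℂ)) := ⟨by exact_mod_cast Fintype.card_ne_zero⟩
  set R := MonoidAlgebra ℂ Q with hR
  haveI : Module.Finite ℂ R :=
    inferInstance
  set π : G →* Q := QuotientGroup.mk' N with hπ
  have ha' : π a ≠ 1 := fun h => ha ((QuotientGroup.eq_one_iff a).1 h)
  -- find a simple submodule on which (of (π a)) acts nontrivially
  have hsep : ∃ W : Submodule R R, IsSimpleModule R W ∧
      ∃ w : R, w ∈ W ∧ (MonoidAlgebra.of ℂ Q (π a)) * w ≠ w := by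
    by_contra hcon
    push_neg at hcon
    have hall : ∀ x : R, (MonoidAlgebra.of ℂ Q (π a)) * x = x := by
      intro x
      have hx : x ∈ sSup {m : Submodule R R | IsSimpleModule R m} := by
        rw [IsSemisimpleModule.sSup_simples_eq_top R R]; trivial
      rw [sSup_eq_iSup'] at hx
      refine Submodule.iSup_induction (motive := fun y => (MonoidAlgebra.of ℂ Q (π a)) * y = y)
        _ hx (fun W y hy => ?_) (by show _ * (0:R) = 0; rw [mul_zero]) ?_
      · exact hcon W.1 W.2 y hy
      · intro u v hu hv
        show _ * (u + v) = u + v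
        rw [mul_add]
        rw [show (MonoidAlgebra.of ℂ Q (π a)) * u = u from hu,
          show (MonoidAlgebra.of ℂ Q (π a)) * v = v from hv]
    have h1 := hall 1
    rw [mul_one] at h1
    exact ha' (MonoidAlgebra.of_injective h1)
  obtain ⟨W, hW, w, hw, hwa⟩ := hsep
  haveI := hW
  haveI : Nontrivial W := IsSimpleModule.nontrivial R W
  haveI : FiniteDimensional ℂ (W.restrictScalars ℂ) := inferInstance
  haveI hfd : FiniteDimensional ℂ W := ‹FiniteDimensional ℂ (W.restrictScalars ℂ)›
  -- the representation of G on W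
  let ρW : Representation ℂ G W := {
    toFun := fun g => {
      toFun := fun u => (MonoidAlgebra.of ℂ Q (π g)) • u
      map_add' := fun u v => smul_add _ u v
      map_smul' := fun c u => by
        apply Subtype.ext
        simp only [RingHom.id_apply, SetLike.val_smul, Submodule.coe_smul_of_tower]
        exact smul_comm _ c (u : R) }
    map_one' := by
      apply LinearMap.ext; intro u
      apply Subtype.ext
      show (MonoidAlgebra.of ℂ Q (π 1)) * (u : R) = (u : R)
      rw [map_one, map_one, one_mul]
    map_mul' := fun g h => by
      apply LinearMap.ext; intro u
      apply Subtype.ext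
      show (MonoidAlgebra.of ℂ Q (π (g * h))) * (u : R)
          = (MonoidAlgebra.of ℂ Q (π g)) * ((MonoidAlgebra.of ℂ Q (π h)) * (u : R))
      rw [map_mul, map_mul, mul_assoc] }
  have hρ : ∀ (g : G) (u : W), ((ρW g u : W) : R) = (MonoidAlgebra.of ℂ Q (π g)) * (u : R) := by
    intro g u
    rfl
  let V : FDRep ℂ G := FDRep.of ρW
  haveI : Nontrivial V := ‹Nontrivial W›
  refine ⟨V, ?_, ?_, ?_⟩
  · apply simple_of_irred
    intro p hp
    let q : Submodule ℂ W := p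
    have hq : ∀ (g : G), ∀ x ∈ q, ρW g x ∈ q := hp
    let p' : Submodule R W := {
      carrier := q
      add_mem' := fun hu hv => q.add_mem hu hv
      zero_mem' := q.zero_mem
      smul_mem' := by
        intro r x hx
        induction r using MonoidAlgebra.induction_on with
        | of qq =>
          obtain ⟨g, rfl⟩ := QuotientGroup.mk'_surjective N qq
          exact hq g x hx
        | add f g hf hg => rw [add_smul]; exact q.add_mem hf hg
        | smul c f hf =>
          rw [smul_assoc]
          exact q.smul_mem c hf }
    have hqbt : q = ⊥ ∨ q = ⊤ := by
      rcases (eq_bot_or_eq_top p' : p' = ⊥ ∨ p' = ⊤) with h | h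
      · left
        ext x
        rw [Submodule.mem_bot]
        constructor
        · intro hxp
          have hx' : x ∈ p' := hxp
          rw [h] at hx'
          simpa using hx'
        · rintro rfl; exact q.zero_mem
      · right
        ext x
        simp only [Submodule.mem_top, iff_true]
        have hx' : x ∈ (⊤ : Submodule R W) := trivial
        rw [← h] at hx'
        exact hx'
    exact hqbt
  · intro n hn
    have hπn : π n = 1 := (QuotientGroup.eq_one_iff n).2 hn
    apply LinearMap.ext; intro u
    show ρW n u = u
    apply Subtype.ext
    rw [hρ, hπn, map_one, one_mul]
  · intro hone
    apply hwa
    have := congrFun (congrArg DFunLike.coe hone) ⟨w, hw⟩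
    have h2 : ((ρW a ⟨w, hw⟩ : W) : R) = w := by
      rw [show ρW a ⟨w, hw⟩ = (⟨w, hw⟩ : W) from this]
    rw [hρ] at h2
    exact h2


theorem nested_iff_commSubgroups_chain_off_center (G : Type) [Group G] [Fintype G]
    (hG : ∃ a b : G, a * b ≠ b * a) :
    IsNested G ↔ ∀ g h : G, g ∉ Subgroup.center G → h ∉ Subgroup.center G →
      (commSubgroup G g ≤ commSubgroup G h ∨ commSubgroup G h ≤ commSubgroup G g) := by
  constructor
  · intro hnest g h _ _
    by_cases hgh : commSubgroup G g ≤ commSubgroup G h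
    · exact Or.inl hgh
    · right
      have hx : ∃ s ∈ gammaSet G g, s ∉ commSubgroup G h := by
        by_contra hcon
        push_neg at hcon
        exact hgh ((Subgroup.closure_le _).2 hcon)
      obtain ⟨s, hsg, hsh⟩ := hx
      haveI := commSubgroup_normal G h
      obtain ⟨V, hVs, hVker, hVa⟩ := exists_simple_rep_separating (commSubgroup G h) hsh
      have hker : commSubgroup G h ≤ repKer V := fun x hxm => mem_repKer.2 (hVker x hxm)
      have hhV : h ∈ charCenter V := (mem_charCenter_iff V hVs).2 hker
      have hgV : g ∉ charCenter V := by
        intro hgV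
        have := (mem_charCenter_iff V hVs).1 hgV (Subgroup.subset_closure hsg)
        exact hVa (mem_repKer.1 this)
      intro b hb
      by_contra hbg
      haveI := commSubgroup_normal G g
      obtain ⟨ψ, hψs, hψker, hψb⟩ := exists_simple_rep_separating (commSubgroup G g) hbg
      have hkerg : commSubgroup G g ≤ repKer ψ := fun x hxm => mem_repKer.2 (hψker x hxm)
      rcases hnest V ψ hVs hψs with hsub | hsub
      · have hhψ := hsub hhV
        have := (mem_charCenter_iff ψ hψs).1 hhψ hb
        exact hψb (mem_repKer.1 this)
      · have hgψ : g ∈ charCenter ψ := (mem_charCenter_iff ψ hψs).2 hkerg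
        exact hgV (hsub hgψ)
  · intro hchain V W hV hW
    by_cases hVW : charCenter V ⊆ charCenter W
    · exact Or.inl hVW
    · right
      obtain ⟨g, hgV, hgW⟩ := Set.not_subset.1 hVW
      intro h hhW
      by_cases hhV : h ∈ charCenter V
      · exact hhV
      · have central_commutator : ∀ z : G, z ∈ Subgroup.center G →
            ∀ x : G, z⁻¹ * x⁻¹ * z * x = 1 := by
          intro z hz x
          have hcomm : x * z = z * x := Subgroup.mem_center_iff.1 hz x
          calc z⁻¹ * x⁻¹ * z * x = z⁻¹ * x⁻¹ * (z * x) := by group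
            _ = z⁻¹ * x⁻¹ * (x * z) := by rw [hcomm]
            _ = 1 := by group
        have hgc : g ∉ Subgroup.center G := by
          intro hgc
          apply hgW
          apply (mem_charCenter_iff W hW).2
          apply (Subgroup.closure_le _).2
          rintro s ⟨x, rfl⟩
          have h1 : g⁻¹ * x⁻¹ * g * x = 1 := central_commutator g hgc x
          rw [h1]
          exact (repKer W).one_mem
        have hhc : h ∉ Subgroup.center G := by
          intro hhc
          apply hhV
          apply (mem_charCenter_iff V hV).2
          apply (Subgroup.closure_le _).2
          rintro s ⟨x, rfl⟩
          have h1 : h⁻¹ * x⁻¹ * h * x = 1 := central_commutator h hhc x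
          rw [h1]
          exact (repKer V).one_mem
        rcases hchain g h hgc hhc with hle | hle
        · exact absurd ((mem_charCenter_iff W hW).2
            (hle.trans ((mem_charCenter_iff W hW).1 hhW))) hgW
        · exact (mem_charCenter_iff V hV).2 (hle.trans ((mem_charCenter_iff V hV).1 hgV))
end

section
/- Let G be a finite group and suppose that for all g, h ∈ G, either γ_G(g) ⊆ γ_G(h) or γ_G(h) ⊆ γ_G(g). Then for every g ∈ G, the set γ_G(g) is a subgroup of G. -/
open CategoryTheory

lemma gamma_conj_eq (G : Type*) [Group G] (g y : G) :
    gammaSet G (y⁻¹ * g * y) = (fun a => y⁻¹ * a * y) '' gammaSet G g := by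
  ext a
  constructor
  · rintro ⟨x, rfl⟩
    exact ⟨g⁻¹ * (y * x * y⁻¹)⁻¹ * g * (y * x * y⁻¹), ⟨y * x * y⁻¹, rfl⟩, by group⟩
  · rintro ⟨b, ⟨x, rfl⟩, rfl⟩
    exact ⟨y⁻¹ * x * y, by group⟩

lemma gamma_conj_mem (G : Type*) [Group G] [Fintype G]
    (hchain : ∀ g h : G, gammaSet G g ⊆ gammaSet G h ∨ gammaSet G h ⊆ gammaSet G g)
    (g y a : G) (ha : a ∈ gammaSet G g) : y⁻¹ * a * y ∈ gammaSet G g := by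
  have hinj : Function.Injective (fun a : G => y⁻¹ * a * y) := by
    intro u v h
    simpa using mul_left_cancel (mul_right_cancel h)
  have hcard : (gammaSet G (y⁻¹ * g * y)).ncard = (gammaSet G g).ncard := by
    rw [gamma_conj_eq, Set.ncard_image_of_injective _ hinj]
  have heq : gammaSet G g = gammaSet G (y⁻¹ * g * y) := by
    rcases hchain g (y⁻¹ * g * y) with h | h
    · exact Set.eq_of_subset_of_ncard_le h hcard.le (Set.toFinite _)
    · exact (Set.eq_of_subset_of_ncard_le h hcard.ge (Set.toFinite _)).symm
  rw [heq, gamma_conj_eq]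
  exact ⟨a, ha, rfl⟩

theorem gammaSet_isSubgroup_of_chain (G : Type*) [Group G] [Fintype G]
    (hchain : ∀ g h : G, gammaSet G g ⊆ gammaSet G h ∨ gammaSet G h ⊆ gammaSet G g) :
    ∀ g : G, ∃ H : Subgroup G, (H : Set G) = gammaSet G g := by
  intro g
  refine ⟨{ carrier := gammaSet G g
            one_mem' := ⟨1, by group⟩
            mul_mem' := ?_
            inv_mem' := ?_ }, rfl⟩
  · rintro a b ⟨y, rfl⟩ hb
    obtain ⟨x, hx⟩ := gamma_conj_mem G hchain g y⁻¹ b hb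
    have : (g⁻¹ * y⁻¹ * g * y) * b = g⁻¹ * (x * y)⁻¹ * g * (x * y) := by
      have : b = y⁻¹ * (g⁻¹ * x⁻¹ * g * x) * y := by
        have := hx
        simp only [inv_inv] at this
        rw [← this]; group
      rw [this]; group
    exact ⟨x * y, this⟩
  · rintro a ⟨x, rfl⟩
    have h1 : g⁻¹ * (x⁻¹)⁻¹ * g * x⁻¹ ∈ gammaSet G g := ⟨x⁻¹, rfl⟩
    have := gamma_conj_mem G hchain g x _ h1
    obtain ⟨z, hz⟩ := this
    exact ⟨z, by rw [← hz]; group⟩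
end

section
/- Let G be a nested finite group with chain of centers G = X₀ > X₁ > ⋯ > Xₙ ≥ 1, let 0 ≤ i ≤ n−1, and let ψ ∈ Irr(G) be an irreducible character whose kernel does not contain [Xᵢ,G]. Then Z(ψ) ≤ Xᵢ₊₁. -/
open CategoryTheory

section Aux
open Polynomial

open Polynomial

lemma multiset_sum_zero (t : Multiset ℝ) (h0 : ∀ x ∈ t, 0 ≤ x) (hs : t.sum = 0) :
    ∀ x ∈ t, x = 0 := by
  induction t using Multiset.induction with
  | empty => simp
  | cons a t ih =>
    simp only [Multiset.sum_cons] at hs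
    have ha : 0 ≤ a := h0 a (Multiset.mem_cons_self a t)
    have ht : 0 ≤ t.sum :=
      Multiset.sum_nonneg (fun x hx => h0 x (Multiset.mem_cons_of_mem hx))
    intro x hx
    rcases Multiset.mem_cons.mp hx with rfl | hx
    · linarith
    · exact ih (fun y hy => h0 y (Multiset.mem_cons_of_mem hy)) (by linarith) x hx

lemma multiset_all_eq (s : Multiset ℂ) (d : ℕ) (hd : 0 < d) (hcard : Multiset.card s = d)
    (habs : ∀ z ∈ s, ‖z‖ = 1) (hsum : ‖s.sum‖ = d) :
    ∀ z ∈ s, z = s.sum / d := by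
  set T := s.sum with hT
  have hterm : ∀ z ∈ s, (z * (starRingEnd ℂ) T).re ≤ (d : ℝ) := by
    intro z hz
    calc (z * (starRingEnd ℂ) T).re ≤ ‖z * (starRingEnd ℂ) T‖ :=
          Complex.re_le_norm _
      _ = ‖z‖ * ‖T‖ := by rw [norm_mul, Complex.norm_conj]
      _ = (d : ℝ) := by rw [habs z hz, hsum, one_mul]
  have hsum_re : (s.map (fun z => (z * (starRingEnd ℂ) T).re)).sum = (d : ℝ) * d := by
    have h1 : (s.map (fun z => z * (starRingEnd ℂ) T)).sum = T * (starRingEnd ℂ) T := by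
      rw [Multiset.sum_map_mul_right]
      simp [hT]
    have h2 : (s.map (fun z => (z * (starRingEnd ℂ) T).re)).sum
        = ((s.map (fun z => z * (starRingEnd ℂ) T)).sum).re := by
      rw [show ((s.map (fun z => z * (starRingEnd ℂ) T)).sum).re
          = Complex.reAddGroupHom ((s.map (fun z => z * (starRingEnd ℂ) T)).sum) from rfl,
        AddMonoidHom.map_multiset_sum (Complex.reAddGroupHom)
        (s.map (fun z => z * (starRingEnd ℂ) T)), Multiset.map_map]
      rfl
    rw [h2, h1, Complex.mul_conj, Complex.ofReal_re, Complex.normSq_eq_norm_sq, hsum]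
    push_cast
    ring
  have hall_re : ∀ z ∈ s, (z * (starRingEnd ℂ) T).re = (d : ℝ) := by
    intro z hz
    have key := multiset_sum_zero (s.map (fun z => (d : ℝ) - (z * (starRingEnd ℂ) T).re))
      (by
        intro x hx
        obtain ⟨w, hw, rfl⟩ := Multiset.mem_map.mp hx
        linarith [hterm w hw])
      (by
        rw [Multiset.sum_map_sub, Multiset.map_const', Multiset.sum_replicate, hcard, hsum_re]
        simp [nsmul_eq_mul])
    have := key ((d : ℝ) - (z * (starRingEnd ℂ) T).re) (Multiset.mem_map_of_mem _ hz)
    linarith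
  intro z hz
  have hre := hall_re z hz
  have habs' : ‖z * (starRingEnd ℂ) T‖ = (d : ℝ) := by
    rw [norm_mul, Complex.norm_conj, habs z hz, hsum, one_mul]
  have him : (z * (starRingEnd ℂ) T).im = 0 := by
    have h1 := Complex.sq_norm (z * (starRingEnd ℂ) T)
    rw [habs', Complex.normSq_apply] at h1
    have h2 : (z * (starRingEnd ℂ) T).im * (z * (starRingEnd ℂ) T).im = 0 := by nlinarith
    exact mul_self_eq_zero.mp h2
  have hzT : z * (starRingEnd ℂ) T = (d : ℂ) := by
    apply Complex.ext <;> simp [hre, him]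
  have hd' : (d : ℂ) ≠ 0 := Nat.cast_ne_zero.mpr hd.ne'
  have hTT : (starRingEnd ℂ) T * T = (d : ℂ) ^ 2 := by
    rw [mul_comm, Complex.mul_conj, Complex.normSq_eq_norm_sq, hsum]
    push_cast
    ring
  have hmul : z * ((starRingEnd ℂ) T * T) = (d : ℂ) * T := by
    rw [← mul_assoc, hzT]
  rw [hTT] at hmul
  have hzd : z * d = T := by
    apply mul_right_cancel₀ hd'
    linear_combination hmul
  rw [eq_div_iff hd']
  exact hzd


lemma eval_charpoly_eq_det {M : Type} [AddCommGroup M] [Module ℂ M] [FiniteDimensional ℂ M]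
    (f : Module.End ℂ M) (μ : ℂ) :
    (LinearMap.charpoly f).eval μ
      = LinearMap.det (algebraMap ℂ (Module.End ℂ M) μ - f) := by
  classical
  let b := Module.finBasis ℂ M
  rw [← LinearMap.charpoly_toMatrix f b, ← LinearMap.det_toMatrix b]
  rw [Matrix.charpoly, show ((Matrix.charmatrix (LinearMap.toMatrix b b f)).det.eval μ)
    = (Polynomial.evalRingHom μ) (Matrix.charmatrix (LinearMap.toMatrix b b f)).det from rfl,
    RingHom.map_det]
  congr 1
  ext i j
  by_cases h : i = j <;>
    simp [h, Matrix.charmatrix_apply, Matrix.map_apply, LinearMap.toMatrix_algebraMap,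
      Matrix.diagonal_apply, Matrix.one_apply, map_sub, Module.algebraMap_end_eq_smul_id,
      Matrix.smul_apply, LinearMap.map_sub]

lemma end_eq_smul_one {M : Type} [AddCommGroup M] [Module ℂ M] [FiniteDimensional ℂ M]
    (f : Module.End ℂ M) (m : ℕ) (hm : 0 < m) (hf : f ^ m = 1)
    (htr : ‖LinearMap.trace ℂ M f‖ = (Module.finrank ℂ M : ℝ)) :
    ∃ c : ℂ, c ≠ 0 ∧ f = c • (1 : Module.End ℂ M) := by
  classical
  set d := Module.finrank ℂ M with hdd
  rcases Nat.eq_zero_or_pos d with hd0 | hd0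
  · haveI : Subsingleton M := Module.finrank_zero_iff.mp (by rw [← hdd]; exact hd0)
    exact ⟨1, one_ne_zero, by ext x; exact Subsingleton.elim _ _⟩
  -- f is integral, minpoly divides X^m - 1
  have haev : (Polynomial.aeval f) ((X : ℂ[X]) ^ m - C 1) = 0 := by
    simp [map_sub, map_pow, hf]
  have hint : IsIntegral ℂ f := ⟨(X : ℂ[X]) ^ m - C 1, monic_X_pow_sub_C 1 hm.ne', haev⟩
  have hdvd : minpoly ℂ f ∣ X ^ m - C 1 := minpoly.dvd ℂ f haev
  -- charpoly facts
  set P := LinearMap.charpoly f with hP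
  have hmonic : P.Monic := LinearMap.charpoly_monic f
  have hdeg : P.natDegree = d := LinearMap.charpoly_natDegree f
  have hsplits : P.Splits := IsAlgClosed.splits P
  set s := P.roots with hs
  have hcard : Multiset.card s = d := (Polynomial.splits_iff_card_roots.mp hsplits).trans hdeg
  -- every root is a root of unity
  have hpow : ∀ μ ∈ s, μ ^ m = 1 := by
    intro μ hμ
    have hroot : P.IsRoot μ := Polynomial.isRoot_of_mem_roots hμ
    have heig : f.HasEigenvalue μ := by
      rw [Module.End.hasEigenvalue_iff_mem_spectrum, spectrum.mem_iff]
      intro hu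
      have hdet := LinearMap.isUnit_det _ hu
      rw [← eval_charpoly_eq_det f μ] at hdet
      rw [Polynomial.IsRoot.def] at hroot
      rw [hroot] at hdet
      exact hdet.ne_zero rfl
    have hmin : (minpoly ℂ f).IsRoot μ := Module.End.isRoot_of_hasEigenvalue heig
    have : (X ^ m - C 1 : ℂ[X]).IsRoot μ := hmin.dvd hdvd
    rw [Polynomial.IsRoot.def] at this
    simp only [eval_sub, eval_pow, eval_X, eval_C] at this
    linear_combination this
  have habs1 : ∀ μ ∈ s, ‖μ‖ = 1 := by
    intro μ hμ
    have h1 : ‖μ‖ ^ m = 1 := by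
      rw [← norm_pow, hpow μ hμ, norm_one]
    have h0 : 0 ≤ ‖μ‖ := norm_nonneg μ
    rcases lt_trichotomy (‖μ‖) 1 with h | h | h
    · exact absurd h1 (by have := pow_lt_one₀ h0 h hm.ne'; linarith)
    · exact h
    · exact absurd h1 (by have := one_lt_pow₀ h hm.ne'; linarith)
  -- trace is sum of roots
  have htrace : LinearMap.trace ℂ M f = s.sum := by
    let b := Module.finBasis ℂ M
    rw [LinearMap.trace_eq_matrix_trace ℂ b f,
      Matrix.trace_eq_sum_roots_charpoly, LinearMap.charpoly_toMatrix]
  have hsum : ‖s.sum‖ = (d : ℝ) := by rw [← htrace]; exact htr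
  have hall := multiset_all_eq s d hd0 hcard habs1 hsum
  set u := s.sum / (d : ℂ) with hu
  -- |u| = 1 and u ≠ 0
  obtain ⟨z, hz⟩ := Multiset.exists_mem_of_ne_zero
    (by rw [← Multiset.card_pos, hcard] at *; exact hd0 : s ≠ 0)
  have huabs : ‖u‖ = 1 := by rw [← hall z hz]; exact habs1 z hz
  have hune : u ≠ 0 := by
    intro h; rw [h, norm_zero] at huabs; norm_num at huabs
  -- charpoly = (X - C u)^d
  have hPeq : P = (X - C u) ^ d := by
    have h1 : P = (s.map fun a => X - C a).prod :=
      hsplits.eq_prod_roots_of_monic hmonic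
    have h2 : s.map (fun a => X - C a) = s.map (fun _ => X - C u) :=
      Multiset.map_congr rfl (fun z hz => by rw [hall z hz])
    rw [h1, h2, Multiset.map_const', Multiset.prod_replicate, hcard]
  -- minpoly = X - C u
  have hqP : minpoly ℂ f ∣ (X - C u) ^ d := hPeq ▸ LinearMap.minpoly_dvd_charpoly f
  obtain ⟨k, hk, hassoc⟩ := (dvd_prime_pow (Polynomial.prime_X_sub_C u) d).mp hqP
  have hqeq : minpoly ℂ f = (X - C u) ^ k :=
    Polynomial.eq_of_monic_of_associated (minpoly.monic hint) ((monic_X_sub_C u).pow k) hassoc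
  have hsep : (minpoly ℂ f).Separable :=
    Polynomial.Separable.of_dvd
      (Polynomial.separable_X_pow_sub_C (1 : ℂ) (Nat.cast_ne_zero.mpr hm.ne') one_ne_zero) hdvd
  have hk1 : k = 1 := by
    haveI : Nontrivial M := Module.finrank_pos_iff.mp hd0
    have hkne : k ≠ 0 := by
      intro h
      rw [h, pow_zero] at hqeq
      have := minpoly.natDegree_pos hint
      rw [hqeq] at this
      simp at this
    by_contra hne
    have hk2 : 2 ≤ k := by omega
    have hsq : Squarefree (minpoly ℂ f) := hsep.squarefree
    have : IsUnit (X - C u : ℂ[X]) := by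
      apply hsq (X - C u)
      rw [hqeq, ← sq]
      exact pow_dvd_pow _ hk2
    exact Polynomial.not_isUnit_X_sub_C u this
  have haevq := minpoly.aeval ℂ f
  rw [hqeq, hk1, pow_one] at haevq
  simp only [map_sub, aeval_X, aeval_C] at haevq
  refine ⟨u, hune, ?_⟩
  have hfeq : f = algebraMap ℂ (Module.End ℂ M) u := sub_eq_zero.mp haevq
  rw [hfeq, Module.algebraMap_end_eq_smul_id]
  rfl

lemma rho_scalar {G : Type} [Group G] [Fintype G] (V : FDRep ℂ G) {g : G}
    (hg : g ∈ charCenter V) : ∃ c : ℂ, c ≠ 0 ∧ V.ρ g = c • (1 : Module.End ℂ V) := by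
  have hm : 0 < orderOf g := orderOf_pos g
  have hf : (V.ρ g) ^ orderOf g = 1 := by
    rw [← map_pow, pow_orderOf_eq_one, map_one]
  have hg' : ((‖V.character g‖ : ℝ) : ℂ) = ((Module.finrank ℂ V : ℕ) : ℂ) := by
    have h1 : ((‖V.character g‖ : ℝ) : ℂ) = V.character 1 := hg
    rw [h1, FDRep.char_one]
  have htr : ‖LinearMap.trace ℂ V (V.ρ g)‖ = (Module.finrank ℂ V : ℝ) := by
    have h2 : V.character g = LinearMap.trace ℂ V (V.ρ g) := rfl
    rw [← h2]
    exact_mod_cast hg'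
  exact end_eq_smul_one (V.ρ g) (orderOf g) hm hf htr

lemma setComm_subset_charKer {G : Type} [Group G] [Fintype G] (V : FDRep ℂ G) {S : Set G}
    (hS : S ⊆ charCenter V) : (setCommSubgroup G S : Set G) ⊆ charKer V := by
  let K : Subgroup G :=
    { carrier := {g | V.ρ g = 1}
      one_mem' := by simp only [Set.mem_setOf_eq, map_one]
      mul_mem' := by
        intro a b ha hb
        simp only [Set.mem_setOf_eq] at *
        rw [map_mul, ha, hb, one_mul]
      inv_mem' := by
        intro a ha
        simp only [Set.mem_setOf_eq] at *
        have h1 : V.ρ a⁻¹ * V.ρ a = 1 := by rw [← map_mul, inv_mul_cancel, map_one]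
        rwa [ha, mul_one] at h1 }
  have hgen : {a | ∃ y ∈ S, ∃ x : G, a = y⁻¹ * x⁻¹ * y * x} ⊆ (K : Set G) := by
    rintro a ⟨y, hy, x, rfl⟩
    obtain ⟨c, hc, hcy⟩ := rho_scalar V (hS hy)
    have hyinv : V.ρ y⁻¹ = c⁻¹ • (1 : Module.End ℂ V) := by
      have h1 : V.ρ y⁻¹ * V.ρ y = 1 := by rw [← map_mul, inv_mul_cancel, map_one]
      have h2 : (c • (1 : Module.End ℂ V)) * (c⁻¹ • (1 : Module.End ℂ V)) = 1 := by
        rw [smul_mul_assoc, one_mul, smul_smul, mul_inv_cancel₀ hc, one_smul]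
      calc V.ρ y⁻¹ = V.ρ y⁻¹ * ((c • (1 : Module.End ℂ V)) * (c⁻¹ • 1)) := by
            rw [h2, mul_one]
        _ = (V.ρ y⁻¹ * V.ρ y) * (c⁻¹ • 1) := by rw [← hcy, mul_assoc]
        _ = c⁻¹ • 1 := by rw [h1, one_mul]
    show V.ρ (y⁻¹ * x⁻¹ * y * x) = 1
    rw [map_mul, map_mul, map_mul, hyinv, hcy]
    rw [smul_mul_assoc, smul_mul_assoc, one_mul, mul_smul_comm, smul_smul,
      inv_mul_cancel₀ hc, one_smul, mul_one, ← map_mul, inv_mul_cancel, map_one]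
  have hle : setCommSubgroup G S ≤ K := (Subgroup.closure_le K).mpr hgen
  intro g hg
  have hgK : V.ρ g = 1 := hle hg
  show V.character g = V.character 1
  show LinearMap.trace ℂ V (V.ρ g) = LinearMap.trace ℂ V (V.ρ (1 : G))
  rw [hgK, map_one V.ρ]

end Aux

theorem charCenter_le_of_not_ker (G : Type) [Group G] [Fintype G]
    (n : ℕ) (X : ℕ → Set G)
    (hX0 : X 0 = Set.univ)
    (hstrict : ∀ i < n, X (i + 1) ⊂ X i)
    (hcenters : {S : Set G | ∃ V : FDRep ℂ G, Simple V ∧ S = charCenter V} =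
      {S : Set G | ∃ i ≤ n, S = X i}) :
    ∀ i < n, ∀ ψ : FDRep ℂ G, Simple ψ →
      ¬ ((setCommSubgroup G (X i) : Set G) ⊆ charKer ψ) →
        charCenter ψ ⊆ X (i + 1) := by
  have hmono : ∀ a b : ℕ, a ≤ b → b ≤ n → X b ⊆ X a := by
    intro a b hab hbn
    induction b with
    | zero =>
      have : a = 0 := Nat.le_zero.mp hab
      subst this; exact subset_rfl
    | succ k ih =>
      rcases Nat.eq_or_lt_of_le hab with rfl | h
      · exact subset_rfl
      · have h1 : X (k + 1) ⊆ X k := (hstrict k (by omega)).subset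
        exact h1.trans (ih (by omega) (by omega))
  intro i hi ψ hψ hker
  have hmem : charCenter ψ ∈ {S : Set G | ∃ j ≤ n, S = X j} := by
    rw [← hcenters]; exact ⟨ψ, hψ, rfl⟩
  obtain ⟨j, hj, hXj⟩ := hmem
  rcases le_or_gt j i with hji | hij
  · exfalso
    apply hker
    apply setComm_subset_charKer
    intro a ha
    rw [hXj]
    exact hmono j i hji (by omega) ha
  · rw [hXj]
    exact hmono (i + 1) j hij hj
end
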